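/- Let B be a right intensity matrix whose final limit P := lim_{t→∞} exp(t·B) exists. Then P is a right stochastic matrix satisfying P·B = 0 and P·P = P. -/

import Mathlib

open Matrix Filter
open scoped Nat

section Aux

variable {Z : Type*} [Fintype Z] [DecidableEq Z]

private lemma pow_entries_nonneg {A : Matrix Z Z ℝ} (h : ∀ i j, 0 ≤ A i j) :
    ∀ (n : ℕ) (i j : Z), 0 ≤ (A ^ n) i j := by
  intro n
  induction n with
  | zero => intro i j; simp [Matrix.one_apply]; split <;> norm_num
  | succ n ih =>
    intro i j
    rw [pow_succ, Matrix.mul_apply]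
    exact Finset.sum_nonneg fun k _ => mul_nonneg (ih i k) (h k j)

private lemma rowsum_pow_eq_zero {A : Matrix Z Z ℝ} (h : ∀ i, ∑ j, A i j = 0)
    {n : ℕ} (hn : n ≠ 0) (i : Z) : ∑ j, (A ^ n) i j = 0 := by
  obtain ⟨m, rfl⟩ := Nat.exists_eq_succ_of_ne_zero hn
  rw [pow_succ]
  calc ∑ j, (A ^ m * A) i j = ∑ j, ∑ k, (A ^ m) i k * A k j := by
        simp [Matrix.mul_apply]
    _ = ∑ k, ∑ j, (A ^ m) i k * A k j := Finset.sum_comm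
    _ = 0 := by simp [← Finset.mul_sum, h]

private lemma hasSum_exp (A : Matrix Z Z ℝ) :
    HasSum (fun n : ℕ => (n !⁻¹ : ℝ) • A ^ n) (NormedSpace.exp A) := by
  letI : SeminormedRing (Matrix Z Z ℝ) := Matrix.linftyOpSemiNormedRing
  letI : NormedRing (Matrix Z Z ℝ) := Matrix.linftyOpNormedRing
  letI : NormedAlgebra ℝ (Matrix Z Z ℝ) := Matrix.linftyOpNormedAlgebra
  simp only [NormedSpace.exp_eq_tsum ℝ]
  exact (NormedSpace.expSeries_summable' A).hasSum

private def entryHom (i j : Z) : Matrix Z Z ℝ →+ ℝ where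
  toFun M := M i j
  map_zero' := rfl
  map_add' _ _ := rfl

private lemma continuous_entry (i j : Z) : Continuous fun M : Matrix Z Z ℝ => M i j :=
  (continuous_apply j).comp (continuous_apply i)

private lemma exp_entry_nonneg {A : Matrix Z Z ℝ} (h : ∀ i j, 0 ≤ A i j) (i j : Z) :
    0 ≤ NormedSpace.exp A i j := by
  have hs : HasSum (fun n : ℕ => ((n !⁻¹ : ℝ) • A ^ n) i j) (NormedSpace.exp A i j) :=
    (hasSum_exp A).map (entryHom i j) (continuous_entry i j)
  refine hs.nonneg fun n => ?_
  simp only [Matrix.smul_apply, smul_eq_mul]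
  exact mul_nonneg (by positivity) (pow_entries_nonneg h n i j)

private def rowSumHom (i : Z) : Matrix Z Z ℝ →+ ℝ where
  toFun M := ∑ j, M i j
  map_zero' := by simp
  map_add' M N := by simp [Finset.sum_add_distrib]

set_option maxHeartbeats 1000000 in
private lemma exp_rowsum_eq_one {A : Matrix Z Z ℝ} (h : ∀ i, ∑ j, A i j = 0) (i : Z) :
    ∑ j, NormedSpace.exp A i j = 1 := by
  have hcont : Continuous fun M : Matrix Z Z ℝ => ∑ j, M i j :=
    continuous_finset_sum _ fun j _ => continuous_entry i j
  have hs : HasSum (fun n : ℕ => ∑ j, ((n !⁻¹ : ℝ) • A ^ n) i j)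
      (∑ j, NormedSpace.exp A i j) :=
    (hasSum_exp A).map (rowSumHom i) hcont
  have heq : (fun n : ℕ => ∑ j, ((n !⁻¹ : ℝ) • A ^ n) i j) =
      fun n : ℕ => if n = 0 then (1 : ℝ) else 0 := by
    funext n
    rcases eq_or_ne n 0 with rfl | hn
    · simp [Matrix.one_apply]
    · simp only [Matrix.smul_apply, smul_eq_mul, ← Finset.mul_sum,
        rowsum_pow_eq_zero h hn, if_neg hn, mul_zero]
  rw [heq] at hs
  have h1 : HasSum (fun n : ℕ => if n = 0 then (1 : ℝ) else 0) 1 := hasSum_ite_eq 0 1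
  exact hs.unique h1

end Aux

/-- If `P` is the final limit of `exp (t • B)` for a right intensity matrix
`B`, then `P` is right stochastic, `P * B = 0`, and `P * P = P`. -/
theorem final_limit_properties {Z : Type*} [Fintype Z] [DecidableEq Z]
    (B : Matrix Z Z ℝ)
    (hoff : ∀ i j, i ≠ j → 0 ≤ B i j)
    (hrow : ∀ i, ∑ j, B i j = 0)
    (P : Matrix Z Z ℝ)
    (hP : Tendsto (fun t : ℝ => NormedSpace.exp (t • B)) atTop (nhds P)) :
    ((∀ i j, 0 ≤ P i j) ∧ (∀ i, ∑ j, P i j = 1)) ∧ P * B = 0 ∧ P * P = P := by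
  -- the rows of `exp (t•B)` sum to zero
  have hrow' : ∀ t : ℝ, ∀ i, ∑ j, (t • B) i j = 0 := by
    intro t i; simp [← Finset.mul_sum, hrow i]
  -- nonnegativity of entries of `exp (t•B)` for `t ≥ 0`
  set c : ℝ := ∑ k, |B k k| with hc
  have hcB : ∀ i, 0 ≤ B i i + c := by
    intro i
    have h1 : |B i i| ≤ c := Finset.single_le_sum (f := fun k => |B k k|)
      (fun k _ => abs_nonneg _) (Finset.mem_univ i)
    have h2 : -B i i ≤ |B i i| := neg_le_abs _
    linarith
  have hexp_nonneg : ∀ t : ℝ, 0 ≤ t → ∀ i j, 0 ≤ NormedSpace.exp (t • B) i j := by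
    intro t ht i j
    have hA : ∀ i j, 0 ≤ (t • B + (t * c) • (1 : Matrix Z Z ℝ)) i j := by
      intro i j
      rcases eq_or_ne i j with rfl | hij
      · simp only [Matrix.add_apply, Matrix.smul_apply, Matrix.one_apply_eq, smul_eq_mul,
          mul_one]
        have := hcB i
        nlinarith
      · simp only [Matrix.add_apply, Matrix.smul_apply, Matrix.one_apply_ne hij, smul_eq_mul,
          mul_zero, add_zero]
        exact mul_nonneg ht (hoff i j hij)
    have hsplit : NormedSpace.exp (t • B) =
        NormedSpace.exp (t • B + (t * c) • (1 : Matrix Z Z ℝ)) *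
          NormedSpace.exp ((-(t * c)) • (1 : Matrix Z Z ℝ)) := by
      rw [← Matrix.exp_add_of_commute]
      · congr 1
        rw [add_assoc, ← add_smul]
        simp
      · exact ((Commute.one_right _).smul_right _).add_left
          (((Commute.refl (1 : Matrix Z Z ℝ)).smul_left _).smul_right _)
    have hscalar : NormedSpace.exp ((-(t * c)) • (1 : Matrix Z Z ℝ)) =
        Real.exp (-(t * c)) • (1 : Matrix Z Z ℝ) := by
      letI : SeminormedRing (Matrix Z Z ℝ) := Matrix.linftyOpSemiNormedRing
      letI : NormedRing (Matrix Z Z ℝ) := Matrix.linftyOpNormedRing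
      letI : NormedAlgebra ℝ (Matrix Z Z ℝ) := Matrix.linftyOpNormedAlgebra
      have := NormedSpace.algebraMap_exp_comm (𝕂 := ℝ) (𝔸 := Matrix Z Z ℝ) (-(t * c))
      rw [Algebra.algebraMap_eq_smul_one, Algebra.algebraMap_eq_smul_one, ← Real.exp_eq_exp_ℝ] at this
      exact this.symm
    rw [hsplit, hscalar]
    have hnn := exp_entry_nonneg hA
    rw [Matrix.mul_smul, Matrix.mul_one, Matrix.smul_apply, smul_eq_mul]
    exact mul_nonneg (Real.exp_pos _).le (hnn i j)
  -- entrywise limits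
  have hPentry : ∀ i j, Tendsto (fun t : ℝ => NormedSpace.exp (t • B) i j) atTop
      (nhds (P i j)) := fun i j =>
    ((continuous_entry i j).continuousAt.tendsto.comp hP)
  constructor
  · constructor
    · intro i j
      refine ge_of_tendsto (hPentry i j) ?_
      filter_upwards [eventually_ge_atTop (0 : ℝ)] with t ht
      exact hexp_nonneg t ht i j
    · intro i
      have h1 : Tendsto (fun t : ℝ => ∑ j, NormedSpace.exp (t • B) i j) atTop
          (nhds (∑ j, P i j)) := tendsto_finset_sum _ fun j _ => hPentry i j
      have h2 : (fun t : ℝ => ∑ j, NormedSpace.exp (t • B) i j) = fun _ => (1 : ℝ) := by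
        funext t; exact exp_rowsum_eq_one (hrow' t) i
      rw [h2] at h1
      exact tendsto_nhds_unique h1 tendsto_const_nhds
  -- key identity : P * exp (s • B) = P
  have key : ∀ s : ℝ, P * NormedSpace.exp (s • B) = P := by
    intro s
    have h1 : Tendsto (fun t : ℝ => NormedSpace.exp (t • B) * NormedSpace.exp (s • B))
        atTop (nhds (P * NormedSpace.exp (s • B))) := hP.mul tendsto_const_nhds
    have h2 : ∀ t : ℝ, NormedSpace.exp (t • B) * NormedSpace.exp (s • B) =
        NormedSpace.exp ((t + s) • B) := by
      intro t
      rw [add_smul, Matrix.exp_add_of_commute]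
      exact ((Commute.refl B).smul_left t).smul_right s
    have h3 : Tendsto (fun t : ℝ => NormedSpace.exp ((t + s) • B)) atTop (nhds P) :=
      hP.comp (tendsto_atTop_add_const_right _ s tendsto_id)
    exact tendsto_nhds_unique (h1.congr h2) h3
  constructor
  · -- P * B = 0, via derivative of the constant function s ↦ P * exp (s • B)
    letI : SeminormedRing (Matrix Z Z ℝ) := Matrix.linftyOpSemiNormedRing
    letI : NormedRing (Matrix Z Z ℝ) := Matrix.linftyOpNormedRing
    letI : NormedAlgebra ℝ (Matrix Z Z ℝ) := Matrix.linftyOpNormedAlgebra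
    have hd : HasDerivAt (fun s : ℝ => P * NormedSpace.exp (s • B))
        (P * (NormedSpace.exp ((0 : ℝ) • B) * B)) 0 :=
      (hasDerivAt_exp_smul_const B 0).const_mul P
    have hconst : HasDerivAt (fun s : ℝ => P * NormedSpace.exp (s • B))
        (0 : Matrix Z Z ℝ) 0 := by
      have : (fun s : ℝ => P * NormedSpace.exp (s • B)) = fun _ => P := funext key
      rw [this]
      exact hasDerivAt_const _ _
    have := hd.unique hconst
    rwa [zero_smul, NormedSpace.exp_zero, one_mul] at this
  · -- P * P = P
    have h1 : Tendsto (fun t : ℝ => P * NormedSpace.exp (t • B)) atTop (nhds (P * P)) :=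
      tendsto_const_nhds.mul hP
    have h2 : (fun t : ℝ => P * NormedSpace.exp (t • B)) = fun _ => P := funext key
    rw [h2] at h1
    exact tendsto_nhds_unique h1 tendsto_const_nhds
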